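/- Let P be an r-differential poset with r ≥ 2, k and n positive integers, and let t_0 ⋖ t_1 ⋖ ⋯ and s_0 ⋖ s_1 ⋖ ⋯ be saturated chains as guaranteed for r ≥ 2 (rank(t_m) = rank(s_m) = m, each covering at most one element, t_0 = s_0, t_m ≠ s_m for m ≥ 1). Then (n+1)!_{r,k} is the smallest positive integer s such that s · v_{n,k} ∈ ℤP_n, where v_{n,k} := Σ_{j=0}^{n} (−1)^j U^j t_{n−j} / (j+1)!_{r,k} ∈ ℚP_n. -/

import Mathlib

open Matrix

variable {α : Type*}

/-- The generalized factorial `ℓ!_{r,k} = (rℓ+k)(r(ℓ-1)+k)⋯(r·1+k)`. -/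
def genFac (r k ℓ : ℕ) : ℕ := ∏ i ∈ Finset.range ℓ, (r * (i + 1) + k)

open Classical in
/-- The matrix of the up map `U_n : ℚP_n → ℚP_{n+1}`. -/
noncomputable def upMat [PartialOrder α] (rk : α → ℕ) (n : ℕ) :
    Matrix {x : α // rk x = n + 1} {x : α // rk x = n} ℚ :=
  Matrix.of fun z x => if x.1 ⋖ z.1 then 1 else 0

/-- The matrix of `DU_n := D_{n+1} U_n`. -/
noncomputable def duMat [PartialOrder α] (rk : α → ℕ)
    [∀ n : ℕ, Fintype {x : α // rk x = n}] (n : ℕ) :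
    Matrix {x : α // rk x = n} {x : α // rk x = n} ℚ :=
  (upMat rk n)ᵀ * upMat rk n

/-- `upIter rk m j v` is `U^j v` for `v ∈ ℚP_m`. -/
noncomputable def upIter [PartialOrder α] (rk : α → ℕ)
    [∀ n : ℕ, Fintype {x : α // rk x = n}] (m : ℕ) :
    (j : ℕ) → ({x : α // rk x = m} → ℚ) → ({x : α // rk x = m + j} → ℚ)
  | 0, v => v
  | j + 1, v => (upMat rk (m + j)).mulVec (upIter rk m j v)

/-- Transport a vector along an equality of ranks. -/
noncomputable def rankCast [PartialOrder α] (rk : α → ℕ) (m n : ℕ)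
    (v : {x : α // rk x = m} → ℚ) : {x : α // rk x = n} → ℚ :=
  fun x => if h : rk x.1 = m then v ⟨x.1, h⟩ else 0

open Classical in
/-- The standard basis vector of `y` in `ℚP_n`. -/
noncomputable def basisVec [PartialOrder α] (rk : α → ℕ) (n : ℕ) (y : α) :
    {x : α // rk x = n} → ℚ :=
  fun x => if x.1 = y then 1 else 0

/-- The vector `v_{n,k} := Σ_{j=0}^n (-1)^j U^j t_{n-j} / (j+1)!_{r,k}`. -/
noncomputable def vVec [PartialOrder α] (rk : α → ℕ)
    [∀ n : ℕ, Fintype {x : α // rk x = n}] (t : ℕ → α) (r k n : ℕ) :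
    {x : α // rk x = n} → ℚ :=
  ∑ j ∈ Finset.range (n + 1),
    ((-1 : ℚ) ^ j / (genFac r k (j + 1) : ℚ)) •
      rankCast rk ((n - j) + j) n (upIter rk (n - j) j (basisVec rk (n - j) (t (n - j))))

section MyAux

lemma myExistsIntSum {ι : Type*} (S : Finset ι) (f : ι → ℚ)
    (hf : ∀ i ∈ S, ∃ z : ℤ, f i = z) : ∃ z : ℤ, ∑ i ∈ S, f i = z := by
  classical
  choose z hz using hf
  refine ⟨∑ i ∈ S.attach, z i.1 i.2, ?_⟩
  rw [← Finset.sum_attach S f]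
  push_cast
  exact Finset.sum_congr rfl fun i _ => hz i.1 i.2

lemma myGenFacPos {r k : ℕ} (hk : 0 < k) (ℓ : ℕ) : 0 < genFac r k ℓ := by
  apply Finset.prod_pos
  intro i _
  omega

lemma myGenFacDvd {r k a b : ℕ} (h : a ≤ b) : genFac r k a ∣ genFac r k b :=
  Finset.prod_dvd_prod_of_subset _ _ _ (Finset.range_subset_range.mpr h)

variable [PartialOrder α] (rk : α → ℕ) [∀ n : ℕ, Fintype {x : α // rk x = n}]

lemma myUpIterInt (m : ℕ) (j : ℕ) (v : {x : α // rk x = m} → ℚ)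
    (hv : ∀ x, ∃ z : ℤ, v x = z) :
    ∀ x, ∃ z : ℤ, upIter rk m j v x = z := by
  classical
  induction j with
  | zero => exact hv
  | succ j ih =>
    intro x
    show ∃ z : ℤ, (upMat rk (m + j)).mulVec (upIter rk m j v) x = z
    rw [Matrix.mulVec, dotProduct]
    apply myExistsIntSum
    intro y _
    obtain ⟨z, hz⟩ := ih y
    refine ⟨if y.1 ⋖ x.1 then z else 0, ?_⟩
    rw [upMat, Matrix.of_apply, hz]
    split <;> simp

/-- Uniqueness of lower covers along the chain `s`. -/
lemma myCoverUnique
    (hgrade : ∀ x y : α, x ⋖ y → rk y = rk x + 1)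
    (s : ℕ → α) (hschain : ∀ m : ℕ, s m ⋖ s (m + 1))
    (hrks : ∀ m : ℕ, rk (s m) = m)
    (hcovs : ∀ m : ℕ, {z : α | z ⋖ s m}.ncard ≤ 1)
    (M : ℕ) (z : α) (hz : z ⋖ s (M + 1)) : z = s M := by
  have hft : Fintype ↑{x : α | rk x = M} := inferInstanceAs (Fintype {x : α // rk x = M})
  have hfin : {z : α | z ⋖ s (M + 1)}.Finite := by
    apply Set.Finite.subset (Set.toFinite {x : α | rk x = M})
    intro w hw
    have h1 := hgrade w (s (M + 1)) hw
    rw [hrks] at h1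
    simp only [Set.mem_setOf_eq]
    omega
  exact (Set.ncard_le_one_iff hfin).mp (hcovs (M + 1)) hz (hschain M)

open Classical in
/-- Key coordinate computation: the value of `U^j t_m` at `s (m+j)`. -/
lemma myUpIterAtS
    (hgrade : ∀ x y : α, x ⋖ y → rk y = rk x + 1)
    (t s : ℕ → α) (hschain : ∀ m : ℕ, s m ⋖ s (m + 1))
    (hrks : ∀ m : ℕ, rk (s m) = m)
    (hcovs : ∀ m : ℕ, {z : α | z ⋖ s m}.ncard ≤ 1)
    (m : ℕ) (j : ℕ) :
    ∀ (N : ℕ) (_ : m + j = N) (h : rk (s N) = m + j),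
      upIter rk m j (basisVec rk m (t m)) ⟨s N, h⟩ =
        if s m = t m then 1 else 0 := by
  classical
  induction j with
  | zero =>
    intro N hN h
    subst hN
    simp [upIter, basisVec]
  | succ j ih =>
    intro N hN h
    subst hN
    show (upMat rk (m + j)).mulVec (upIter rk m j (basisVec rk m (t m)))
        ⟨s (m + (j + 1)), h⟩ = _
    rw [Matrix.mulVec, dotProduct]
    have hkey : ∀ y : {x : α // rk x = m + j},
        (y.1 ⋖ s (m + (j + 1))) ↔ y = ⟨s (m + j), hrks (m + j)⟩ := by
      intro y
      constructor
      · intro hy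
        exact Subtype.ext (myCoverUnique rk hgrade s hschain hrks hcovs (m + j) y.1 hy)
      · rintro rfl
        exact hschain (m + j)
    calc ∑ y : {x : α // rk x = m + j},
          upMat rk (m + j) ⟨s (m + (j + 1)), h⟩ y *
            upIter rk m j (basisVec rk m (t m)) y
        = ∑ y : {x : α // rk x = m + j},
            if y = ⟨s (m + j), hrks (m + j)⟩ then
              upIter rk m j (basisVec rk m (t m)) y else 0 := by
          apply Finset.sum_congr rfl
          intro y _
          rw [upMat, Matrix.of_apply]
          by_cases hc : y.1 ⋖ s (m + (j + 1))
          · rw [if_pos hc, if_pos ((hkey y).mp hc), one_mul]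
          · rw [if_neg hc, if_neg (fun he => hc ((hkey y).mpr he)), zero_mul]
      _ = upIter rk m j (basisVec rk m (t m)) ⟨s (m + j), hrks (m + j)⟩ := by
          rw [Finset.sum_ite_eq' Finset.univ]
          simp
      _ = _ := ih (m + j) rfl (hrks (m + j))

end MyAux

/-- For `r ≥ 2`, `(n+1)!_{r,k}` is the smallest positive integer `s` such that
`s · v_{n,k}` has integer coordinates. -/
theorem genFac_isLeast_denominator [PartialOrder α] [OrderBot α]
    (rk : α → ℕ) (r : ℕ) [∀ n : ℕ, Fintype {x : α // rk x = n}]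
    (hr : 2 ≤ r) (hbot : rk ⊥ = 0)
    (hgrade : ∀ x y : α, x ⋖ y → rk y = rk x + 1)
    (hdown : ∀ x : α, x ≠ ⊥ → ∃ y : α, y ⋖ x)
    (hD1 : ∀ x : α, {z : α | x ⋖ z}.ncard = {y : α | y ⋖ x}.ncard + r)
    (hD2 : ∀ x y : α, x ≠ y →
      {z : α | z ⋖ x ∧ z ⋖ y}.ncard = {z : α | x ⋖ z ∧ y ⋖ z}.ncard)
    (t : ℕ → α) (htchain : ∀ m : ℕ, t m ⋖ t (m + 1))
    (hrkt : ∀ m : ℕ, rk (t m) = m)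
    (hcovt : ∀ m : ℕ, {z : α | z ⋖ t m}.ncard ≤ 1)
    (s : ℕ → α) (hschain : ∀ m : ℕ, s m ⋖ s (m + 1))
    (hrks : ∀ m : ℕ, rk (s m) = m)
    (hcovs : ∀ m : ℕ, {z : α | z ⋖ s m}.ncard ≤ 1)
    (h0 : t 0 = s 0) (hne : ∀ m : ℕ, 1 ≤ m → t m ≠ s m)
    (k n : ℕ) (hk : 0 < k) (hn : 0 < n) :
    IsLeast {c : ℕ | 0 < c ∧ ∀ x : {x : α // rk x = n},
        ∃ m : ℤ, (c : ℚ) * vVec rk t r k n x = (m : ℚ)}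
      (genFac r k (n + 1)) := by
  classical
  have hNpos : 0 < genFac r k (n + 1) := myGenFacPos hk (n + 1)
  have hsEQt : ∀ m : ℕ, (if s m = t m then (1 : ℚ) else 0) =
      if m = 0 then 1 else 0 := by
    intro m
    rcases Nat.eq_zero_or_pos m with hm | hm
    · subst hm; simp [h0]
    · rw [if_neg (fun he => hne m hm he.symm), if_neg (by omega)]
  -- the coordinate of vVec at s n
  have hvs : vVec rk t r k n ⟨s n, hrks n⟩ =
      (-1 : ℚ) ^ n / (genFac r k (n + 1) : ℚ) := by
    rw [vVec, Finset.sum_apply]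
    rw [Finset.sum_eq_single n]
    · have hsub : n - n + n = n := by omega
      rw [Pi.smul_apply, smul_eq_mul, rankCast]
      rw [dif_pos (by rw [hrks]; omega : rk (s n) = n - n + n)]
      rw [myUpIterAtS rk hgrade t s hschain hrks hcovs (n - n) n n hsub]
      rw [hsEQt, if_pos (by omega), mul_one]
    · intro j hj hjn
      simp only [Finset.mem_range] at hj
      have hsub : n - j + j = n := by omega
      rw [Pi.smul_apply, smul_eq_mul, rankCast]
      rw [dif_pos (by rw [hrks]; omega : rk (s n) = n - j + j)]
      rw [myUpIterAtS rk hgrade t s hschain hrks hcovs (n - j) j n hsub]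
      rw [hsEQt, if_neg (by omega), mul_zero]
    · intro hnn
      exact absurd (Finset.mem_range.mpr (by omega)) hnn
  constructor
  · refine ⟨hNpos, ?_⟩
    intro x
    rw [vVec, Finset.sum_apply, Finset.mul_sum]
    apply myExistsIntSum
    intro j hj
    simp only [Finset.mem_range] at hj
    have hsub : n - j + j = n := by omega
    obtain ⟨z, hz⟩ : ∃ z : ℤ, rankCast rk (n - j + j) n
        (upIter rk (n - j) j (basisVec rk (n - j) (t (n - j)))) x = z := by
      rw [rankCast]
      split
      · apply myUpIterInt
        intro y
        refine ⟨if y.1 = t (n - j) then 1 else 0, ?_⟩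
        rw [basisVec]
        split <;> simp
      · exact ⟨0, rfl⟩
    rw [Pi.smul_apply, smul_eq_mul, hz]
    have hdvd : genFac r k (j + 1) ∣ genFac r k (n + 1) := myGenFacDvd (by omega)
    have hne0 : (genFac r k (j + 1) : ℚ) ≠ 0 := by
      exact_mod_cast (myGenFacPos hk (j + 1)).ne'
    have hcast : ((genFac r k (n + 1) / genFac r k (j + 1) : ℕ) : ℚ) =
        (genFac r k (n + 1) : ℚ) / (genFac r k (j + 1) : ℚ) :=
      Nat.cast_div hdvd hne0
    refine ⟨(-1) ^ j * (genFac r k (n + 1) / genFac r k (j + 1) : ℕ) * z, ?_⟩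
    simp only [Int.cast_mul, Int.cast_pow, Int.cast_neg, Int.cast_one, Int.cast_natCast, hcast]
    field_simp
  · intro c hc
    obtain ⟨hcpos, hcint⟩ := hc
    obtain ⟨m, hm⟩ := hcint ⟨s n, hrks n⟩
    rw [hvs] at hm
    have hne0 : (genFac r k (n + 1) : ℚ) ≠ 0 := by exact_mod_cast hNpos.ne'
    have h1 : (c : ℚ) * (-1) ^ n = m * (genFac r k (n + 1) : ℚ) := by
      field_simp at hm
      linarith [hm]
    have h2 : (c : ℤ) * (-1) ^ n = m * (genFac r k (n + 1) : ℤ) := by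
      exact_mod_cast h1
    have hdvd : (genFac r k (n + 1) : ℤ) ∣ (c : ℤ) := by
      refine ⟨m * (-1) ^ n, ?_⟩
      have hsq : ((-1 : ℤ) ^ n) * ((-1 : ℤ) ^ n) = 1 := by
        rw [← mul_pow]; simp
      calc (c : ℤ) = (c : ℤ) * (((-1 : ℤ) ^ n) * ((-1 : ℤ) ^ n)) := by
            rw [hsq, mul_one]
        _ = ((c : ℤ) * (-1) ^ n) * (-1) ^ n := by ring
        _ = (m * (genFac r k (n + 1) : ℤ)) * (-1) ^ n := by rw [h2]
        _ = (genFac r k (n + 1) : ℤ) * (m * (-1) ^ n) := by ring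
    exact Nat.le_of_dvd hcpos (by exact_mod_cast hdvd)
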